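/- Let I ⊆ [0,∞) be a set satisfying the descending chain condition. Then the set I₊ satisfies the descending chain condition. -/

import Mathlib

open Filter

/-- A set of reals satisfies the descending chain condition (DCC) if it contains
no infinite strictly decreasing sequence. -/
def DCC (S : Set ℝ) : Prop := ¬ ∃ f : ℕ → ℝ, StrictAnti f ∧ ∀ n, f n ∈ S

/-- A set of reals satisfies the ascending chain condition (ACC) if it contains
no infinite strictly increasing sequence. -/
def ACC (S : Set ℝ) : Prop := ¬ ∃ f : ℕ → ℝ, StrictMono f ∧ ∀ n, f n ∈ S

/-- `x` is an accumulation point of `S` if every neighborhood of `x` contains a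
point of `S` different from `x`. -/
def IsAccPt (x : ℝ) (S : Set ℝ) : Prop := ∀ ε > 0, ∃ y ∈ S, y ≠ x ∧ |y - x| < ε

/-- The set `∂S` of accumulation points of `S` in `ℝ`. -/
def accPts (S : Set ℝ) : Set ℝ := {x | IsAccPt x S}

/-- The set of all (nonempty) finite sums of elements of `I`. -/
def finSums (I : Set ℝ) : Set ℝ :=
  {x | ∃ l : ℕ, 0 < l ∧ ∃ g : Fin l → ℝ, (∀ p, g p ∈ I) ∧ x = ∑ p, g p}

/-- `I₊ = {0} ∪ { x ∈ [0,1] : x is a nonempty finite sum of elements of I }`. -/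
def plusSet (I : Set ℝ) : Set ℝ := {0} ∪ (Set.Icc 0 1 ∩ finSums I)

/-- `D(I) = { a ≤ 1 : a = (m - 1 + f)/m, m ∈ ℕ⁺, f ∈ I₊ }`. -/
def DSet (I : Set ℝ) : Set ℝ :=
  {a | a ≤ 1 ∧ ∃ m : ℕ, 0 < m ∧ ∃ f ∈ plusSet I, a = ((m : ℝ) - 1 + f) / m}

/-- `𝒟_c(I;J) = { a ≤ 1 : a = (m - 1 + f + kc)/m, m ∈ ℕ⁺, f ∈ I₊,
k a nonzero finite sum of elements of J }`. -/
def DcSet (I J : Set ℝ) (c : ℝ) : Set ℝ :=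
  {a | a ≤ 1 ∧ ∃ m : ℕ, 0 < m ∧ ∃ f ∈ plusSet I, ∃ k ∈ finSums J, k ≠ 0 ∧
    a = ((m : ℝ) - 1 + f + k * c) / m}

/-- The closure `S̄ = S ∪ ∂S` of `S` in `ℝ`. -/
def clSet (S : Set ℝ) : Set ℝ := S ∪ accPts S

/-- If `I ⊆ [0,∞)` satisfies the DCC, then `I₊` satisfies the DCC. -/
theorem dcc_plusSet (I : Set ℝ) (hI0 : I ⊆ Set.Ici 0) (hI : DCC I) :
    DCC (plusSet I) := by
  have hwf : I.IsWF := by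
    rw [Set.isWF_iff_no_descending_seq]
    intro f hf hmem
    exact hI ⟨f, hf, hmem⟩
  have hpwo : (AddSubmonoid.closure I : Set ℝ).IsPWO :=
    (Set.isPWO_iff_isWF.mpr hwf).addSubmonoid_closure (fun x hx => hI0 hx)
  have hsub : plusSet I ⊆ (AddSubmonoid.closure I : Set ℝ) := by
    rintro x (rfl | ⟨-, l, -, g, hg, rfl⟩)
    · exact AddSubmonoid.zero_mem _
    · exact sum_mem fun p _ => AddSubmonoid.subset_closure (hg p)
  have hwf' : (plusSet I).IsWF := (hpwo.mono hsub).isWF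
  rw [Set.isWF_iff_no_descending_seq] at hwf'
  rintro ⟨f, hf, hmem⟩
  exact hwf' f hf hmem
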